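/- There exists an absolute constant C > 0 such that for every squarefree integer q ≥ 2 and every real x ≥ 2, one has ∑ 1/n ≤ C·e^{4·ω(q)}·(log x)^{ω(q)}/x, where the sum runs over all positive integers n ≥ x such that every prime dividing n also divides q. -/

import Mathlib

open scoped Classical

theorem stmt15 :
    ∃ C : ℝ, 0 < C ∧ ∀ q : ℕ, Squarefree q → 2 ≤ q → ∀ x : ℝ, 2 ≤ x →
      (∑' n : ℕ, if x ≤ (n : ℝ) ∧ 0 < n ∧ (∀ p : ℕ, p.Prime → p ∣ n → p ∣ q)
          then (1 : ℝ) / n else 0) ≤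
        C * Real.exp (4 * q.primeFactors.card) *
          Real.log x ^ q.primeFactors.card / x := by
  refine ⟨2, by norm_num, ?_⟩
  intro q hsq hq2 x hx
  have hx0 : (0:ℝ) < x := by linarith
  have hl2 : (0.6931 : ℝ) < Real.log 2 := by
    have := Real.log_two_gt_d9; linarith
  have hlx : Real.log 2 ≤ Real.log x := Real.log_le_log (by norm_num) hx
  have hlxpos : 0 < Real.log x := by linarith
  set σ : ℝ := 1 / (2 * Real.log x) with hσdef
  have hσpos : 0 < σ := by positivity
  have hσlx : σ * Real.log x = 1/2 := by
    field_simp [hσdef]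
    rw [hσdef]; field_simp [hlxpos.ne']
  -- the multiplicative function n ↦ n ^ (-σ)
  let f : ℕ →* ℝ :=
  { toFun := fun n => (n : ℝ) ^ (-σ)
    map_one' := by simp
    map_mul' := fun m n => by
      push_cast
      exact Real.mul_rpow (Nat.cast_nonneg m) (Nat.cast_nonneg n) }
  have hfle1 : ∀ {p : ℕ}, p.Prime → ‖f p‖ < 1 := by
    intro p hp
    have h1p : (1:ℝ) < p := by exact_mod_cast hp.one_lt
    have : (p:ℝ) ^ (-σ) < 1 :=
      Real.rpow_lt_one_of_one_lt_of_neg h1p (by linarith)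
    simpa [f, Real.norm_eq_abs, abs_of_nonneg (Real.rpow_nonneg (Nat.cast_nonneg p) _)]
  obtain ⟨Hs, Hsum⟩ :=
    EulerProduct.summable_and_hasSum_factoredNumbers_prod_filter_prime_geometric
      hfle1 q.primeFactors
  have hfilter : q.primeFactors.filter Nat.Prime = q.primeFactors :=
    Finset.filter_true_of_mem fun p hp => Nat.prime_of_mem_primeFactors hp
  rw [hfilter] at Hsum
  set S := Nat.factoredNumbers q.primeFactors with hS
  set c : ℝ := Real.exp (1/2) / x with hc
  have hc0 : 0 ≤ c := by positivity
  set g : ℕ → ℝ := Set.indicator S (fun n => c * (n : ℝ) ^ (-σ)) with hg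
  have hgsummable : Summable g := by
    rw [hg, ← summable_subtype_iff_indicator]
    exact (Hsum.summable.mul_left c)
  have hgnn : ∀ n, 0 ≤ g n := by
    intro n
    apply Set.indicator_nonneg
    intro m _
    positivity
  -- termwise bound
  have hterm : ∀ n : ℕ,
      (if x ≤ (n : ℝ) ∧ 0 < n ∧ (∀ p : ℕ, p.Prime → p ∣ n → p ∣ q)
        then (1 : ℝ) / n else 0) ≤ g n := by
    intro n
    split_ifs with h
    · obtain ⟨hxn, hn0, hdvd⟩ := h
      have hnS : n ∈ S := by
        rw [hS, Nat.mem_factoredNumbers']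
        intro p hp hpn
        exact Nat.mem_primeFactors.mpr ⟨hp, hdvd p hp hpn, by omega⟩
      rw [hg, Set.indicator_of_mem hnS]
      have hn0' : (0:ℝ) < n := by exact_mod_cast hn0
      have key : (n:ℝ) ^ (σ - 1) ≤ c := by
        have h1 : (n:ℝ) ^ (σ - 1) ≤ x ^ (σ - 1) := by
          apply Real.rpow_le_rpow_of_nonpos hx0 hxn
          have : σ ≤ 1 := by
            rw [hσdef]
            rw [div_le_one (by linarith)]
            linarith
          linarith
        have h2 : x ^ (σ - 1) = c := by
          rw [hc, Real.rpow_def_of_pos hx0]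
          rw [show Real.log x * (σ - 1) = 1/2 - Real.log x by
            have := hσlx; nlinarith]
          rw [Real.exp_sub, Real.exp_log hx0]
        linarith
      calc (1:ℝ)/n = (n:ℝ) ^ (σ - 1) * (n:ℝ) ^ (-σ) := by
            rw [← Real.rpow_add hn0', show σ - 1 + -σ = -1 by ring,
              Real.rpow_neg_one, one_div]
        _ ≤ c * (n:ℝ) ^ (-σ) := by
            apply mul_le_mul_of_nonneg_right key
            positivity
    · exact hgnn n
  have hLHSsummable : Summable (fun n : ℕ =>
      (if x ≤ (n : ℝ) ∧ 0 < n ∧ (∀ p : ℕ, p.Prime → p ∣ n → p ∣ q)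
        then (1 : ℝ) / n else 0)) := by
    apply Summable.of_nonneg_of_le _ hterm hgsummable
    intro n
    split_ifs with h
    · positivity
    · exact le_refl 0
  have step1 : (∑' n : ℕ, if x ≤ (n : ℝ) ∧ 0 < n ∧ (∀ p : ℕ, p.Prime → p ∣ n → p ∣ q)
      then (1 : ℝ) / n else 0) ≤ ∑' n, g n :=
    Summable.tsum_le_tsum hterm hLHSsummable hgsummable
  have step2 : ∑' n, g n = c * ∏ p ∈ q.primeFactors, (1 - (p:ℝ) ^ (-σ))⁻¹ := by
    rw [hg, ← tsum_subtype]
    rw [tsum_mul_left]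
    congr 1
    exact Hsum.tsum_eq
  -- bound each Euler factor
  have hexp2 : (3:ℝ) ≤ Real.exp 2 := by
    have := Real.add_one_le_exp (2:ℝ); linarith
  have hexp4 : (9:ℝ) ≤ Real.exp 4 := by
    have : Real.exp 4 = Real.exp 2 * Real.exp 2 := by
      rw [← Real.exp_add]; norm_num
    nlinarith [Real.exp_pos (2:ℝ)]
  have hexphalf : Real.exp (1/2) ≤ 2 := by
    have h1 : Real.exp (1/2) * Real.exp (1/2) = Real.exp 1 := by
      rw [← Real.exp_add]; norm_num
    nlinarith [Real.exp_pos (1/2 : ℝ), Real.exp_one_lt_d9]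
  have factor_bound : ∀ p ∈ q.primeFactors,
      (1 - (p:ℝ) ^ (-σ))⁻¹ ≤ Real.exp 4 * Real.log x := by
    intro p hp
    have hpp := Nat.prime_of_mem_primeFactors hp
    have hp2 : (2:ℝ) ≤ p := by exact_mod_cast hpp.two_le
    set t : ℝ := σ * Real.log 2 with ht
    have ht0 : 0 < t := by positivity
    clear_value t
    have hthalf : t ≤ 1/2 := by
      rw [ht, hσdef]
      rw [div_mul_eq_mul_div, one_mul, div_le_div_iff₀ (by linarith) (by norm_num)]
      linarith
    have h2σ : (2:ℝ) ^ (-σ) = Real.exp (-t) := by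
      rw [Real.rpow_def_of_pos (by norm_num : (0:ℝ) < 2)]
      rw [ht]; ring_nf
    have hpσ : (p:ℝ) ^ (-σ) ≤ (2:ℝ) ^ (-σ) :=
      Real.rpow_le_rpow_of_nonpos (by norm_num) hp2 (by linarith)
    have hden : t * Real.exp (-t) ≤ 1 - (2:ℝ) ^ (-σ) := by
      rw [h2σ]
      have h1 : t + 1 ≤ Real.exp t := Real.add_one_le_exp t
      have h2 : Real.exp (-t) * Real.exp t = 1 := by
        rw [← Real.exp_add]; simp
      nlinarith [Real.exp_pos (-t)]
    have hdenp : t * Real.exp (-t) ≤ 1 - (p:ℝ) ^ (-σ) := by linarith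
    have hdpos : 0 < t * Real.exp (-t) := by positivity
    have hinv : (1 - (p:ℝ) ^ (-σ))⁻¹ ≤ (t * Real.exp (-t))⁻¹ :=
      inv_anti₀ hdpos hdenp
    refine hinv.trans ?_
    rw [mul_inv, ← Real.exp_neg, neg_neg]
    have hexpt : Real.exp t ≤ 2 := by
      calc Real.exp t ≤ Real.exp (1/2) := Real.exp_le_exp.mpr hthalf
        _ ≤ 2 := hexphalf
    have hinvt : t⁻¹ ≤ 3 * Real.log x := by
      have hteq : t = Real.log 2 / (2 * Real.log x) := by rw [ht, hσdef]; ring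
      rw [hteq, inv_div, div_le_iff₀ (by linarith : (0:ℝ) < Real.log 2)]
      have h1 : (2:ℝ) * Real.log x ≤ (3 * 0.6931) * Real.log x :=
        mul_le_mul_of_nonneg_right (by norm_num) hlxpos.le
      have h2 : (3 * Real.log x) * 0.6931 ≤ (3 * Real.log x) * Real.log 2 :=
        mul_le_mul_of_nonneg_left hl2.le (by positivity)
      linarith
    calc t⁻¹ * Real.exp t ≤ (3 * Real.log x) * 2 := by
          apply mul_le_mul hinvt hexpt (Real.exp_pos t).le (by positivity)
      _ = 6 * Real.log x := by ring
      _ ≤ Real.exp 4 * Real.log x :=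
          mul_le_mul_of_nonneg_right (by linarith) hlxpos.le
  have prod_bound : ∏ p ∈ q.primeFactors, (1 - (p:ℝ) ^ (-σ))⁻¹ ≤
      (Real.exp 4 * Real.log x) ^ q.primeFactors.card := by
    rw [← Finset.prod_const]
    apply Finset.prod_le_prod _ factor_bound
    intro p hp
    have hpp := Nat.prime_of_mem_primeFactors hp
    have h1p : (1:ℝ) < p := by exact_mod_cast hpp.one_lt
    have : (p:ℝ) ^ (-σ) < 1 :=
      Real.rpow_lt_one_of_one_lt_of_neg h1p (by linarith)
    exact inv_nonneg.mpr (by linarith)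
  have prodnn : 0 ≤ ∏ p ∈ q.primeFactors, (1 - (p:ℝ) ^ (-σ))⁻¹ := by
    apply Finset.prod_nonneg
    intro p hp
    have hpp := Nat.prime_of_mem_primeFactors hp
    have h1p : (1:ℝ) < p := by exact_mod_cast hpp.one_lt
    have : (p:ℝ) ^ (-σ) < 1 :=
      Real.rpow_lt_one_of_one_lt_of_neg h1p (by linarith)
    exact inv_nonneg.mpr (by linarith)
  calc (∑' n : ℕ, if x ≤ (n : ℝ) ∧ 0 < n ∧ (∀ p : ℕ, p.Prime → p ∣ n → p ∣ q)
        then (1 : ℝ) / n else 0)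
      ≤ c * ∏ p ∈ q.primeFactors, (1 - (p:ℝ) ^ (-σ))⁻¹ := step2 ▸ step1
    _ ≤ (2 / x) * (Real.exp 4 * Real.log x) ^ q.primeFactors.card := by
        apply mul_le_mul _ prod_bound prodnn (by positivity)
        rw [hc]
        gcongr
    _ = 2 * Real.exp (4 * q.primeFactors.card) *
          Real.log x ^ q.primeFactors.card / x := by
        rw [mul_pow, mul_comm (4:ℝ) (q.primeFactors.card : ℝ), Real.exp_nat_mul]
        ring
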